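/- For the perturbed model 2, the unitary U₃ := U₁ - |δ_{-ℓ,ℓ}⟩⟨δ_{-ℓ-1,ℓ+1}| - |δ_{-ℓ+1,ℓ-1}⟩⟨δ_{-ℓ,ℓ}| + |δ_{-ℓ+1,ℓ-1}⟩⟨δ_{-ℓ-1,ℓ+1}| + |δ_{-ℓ,ℓ}⟩⟨δ_{-ℓ,ℓ}| satisfies U₃ δ_{-ℓ,ℓ} = δ_{-ℓ,ℓ}, and the scattering operator S(U₃,U₀) := W₊(U₃,U₀)* W₋(U₃,U₀) equals S(U₁,U₀), i.e. S(U₃,U₀) δ_{x,j} = δ_{x,j+1} for all (x,j), even though U₃ ≠ U₁. -/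

import Mathlib

noncomputable section

abbrev H : Type := lp (fun _ : ℤ × ℕ => ℂ) 2

noncomputable def δ (x : ℤ) (j : ℕ) : H := lp.single 2 (x, j) 1


lemma δ_inner (x y : ℤ) (j k : ℕ) :
    (inner ℂ (δ x j) (δ y k) : ℂ) = if (y, k) = (x, j) then 1 else 0 := by
  rw [δ, δ, lp.inner_single_left]
  by_cases h : (y, k) = (x, j)
  · simp [h, lp.single_apply_self]
  · rw [if_neg h, lp.single_apply_ne (E := fun _ : ℤ × ℕ => ℂ) 2 (y, k) 1 (Ne.symm h)]
    simp

lemma δ_ne {x y : ℤ} {j k : ℕ} (h : (y, k) ≠ (x, j)) : δ x j ≠ δ y k := by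
  intro he
  have h1 : (inner ℂ (δ x j) (δ y k) : ℂ) = 0 := by rw [δ_inner, if_neg h]
  have h2 : (inner ℂ (δ x j) (δ y k) : ℂ) = 1 := by rw [← he, δ_inner, if_pos rfl]
  rw [h1] at h2
  exact zero_ne_one h2

theorem perturbed_model_2_same_scattering (ℓ : ℕ) (hℓ : 1 ≤ ℓ)
    (U₀ U₁ U₃ : H ≃ₗᵢ[ℂ] H) (Wp Wm : H →ₗᵢ[ℂ] H)
    (hU₀ : ∀ (x : ℤ) (j : ℕ), U₀ (δ x j) = δ (x + 1) j)
    (hU₁a : ∀ (x : ℤ) (j : ℕ), x ≠ -(j : ℤ) - 1 → x ≠ -(j : ℤ) →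
      U₁ (δ x j) = δ (x + 1) j)
    (hU₁b : ∀ j : ℕ, U₁ (δ (-(j : ℤ) - 1) j) = δ (-(j : ℤ)) (j + 1))
    (hU₁c : ∀ j : ℕ, 1 ≤ j → U₁ (δ (-(j : ℤ)) j) = δ (-(j : ℤ) + 1) (j - 1))
    (hU₁d : U₁ (δ 0 0) = δ 1 0)
    (hU₃ : ∀ f : H, U₃ f = U₁ f
      - (inner ℂ (δ (-(ℓ : ℤ) - 1) (ℓ + 1)) f : ℂ) • δ (-(ℓ : ℤ)) ℓ
      - (inner ℂ (δ (-(ℓ : ℤ)) ℓ) f : ℂ) • δ (-(ℓ : ℤ) + 1) (ℓ - 1)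
      + (inner ℂ (δ (-(ℓ : ℤ) - 1) (ℓ + 1)) f : ℂ) • δ (-(ℓ : ℤ) + 1) (ℓ - 1)
      + (inner ℂ (δ (-(ℓ : ℤ)) ℓ) f : ℂ) • δ (-(ℓ : ℤ)) ℓ)
    -- W₊(U₃,U₀):
    (hWpa : ∀ (x : ℤ) (j : ℕ), -(j : ℤ) + 1 ≤ x → Wp (δ x j) = δ x j)
    (hWpb : ∀ (x : ℤ) (j : ℕ), 1 ≤ j → x ≤ -(j : ℤ) → Wp (δ x j) = δ x (j - 1))
    (hWpc : ∀ x : ℤ, -(ℓ : ℤ) + 1 ≤ x → x ≤ 0 → Wp (δ x 0) = δ x (-x).toNat)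
    (hWpd : ∀ x : ℤ, x ≤ -(ℓ : ℤ) → Wp (δ x 0) = δ (x - 1) (-x + 1).toNat)
    -- W₋(U₃,U₀):
    (hWma : ∀ (x : ℤ) (j : ℕ), x ≤ -(j : ℤ) - 1 → Wm (δ x j) = δ x j)
    (hWmb : ∀ (x : ℤ) (j : ℕ), -(j : ℤ) ≤ x → Wm (δ x j) = δ x (j + 1)) :
    U₃ (δ (-(ℓ : ℤ)) ℓ) = δ (-(ℓ : ℤ)) ℓ ∧
    (∀ (x : ℤ) (j : ℕ),
      ContinuousLinearMap.adjoint Wp.toContinuousLinearMap (Wm (δ x j)) = δ x (j + 1)) ∧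
    U₃ ≠ U₁ := by
  have hadj : ∀ g : H, ContinuousLinearMap.adjoint Wp.toContinuousLinearMap (Wp g) = g := by
    intro g
    apply ext_inner_left ℂ
    intro v
    rw [ContinuousLinearMap.adjoint_inner_right]
    exact Wp.inner_map_map v g
  refine ⟨?_, ?_, ?_⟩
  · rw [hU₃, hU₁c ℓ hℓ, δ_inner, δ_inner]
    have hne : ((-(ℓ:ℤ), ℓ) : ℤ × ℕ) ≠ (-(ℓ:ℤ) - 1, ℓ + 1) := by
      intro hh; rw [Prod.mk.injEq] at hh; omega
    rw [if_neg hne, if_pos rfl]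
    simp
  · intro x j
    have key : Wm (δ x j) = Wp (δ x (j + 1)) := by
      by_cases h : x ≤ -(j:ℤ) - 1
      · rw [hWma x j h, hWpb x (j+1) (by omega) (by push_cast; omega)]
        simp
      · rw [hWmb x j (by omega), hWpa x (j+1) (by push_cast; omega)]
    rw [key, hadj]
  · intro he
    have h2 : U₁ (δ (-(ℓ:ℤ) - 1) (ℓ + 1)) = δ (-(ℓ:ℤ)) ℓ := by
      have hc := hU₁c (ℓ + 1) (by omega)
      have hx : (-(↑(ℓ+1)) : ℤ) = -(ℓ:ℤ) - 1 := by push_cast; ring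
      rw [hx] at hc
      convert hc using 2 <;> omega
    have h1 : U₃ (δ (-(ℓ:ℤ) - 1) (ℓ + 1)) = δ (-(ℓ:ℤ) + 1) (ℓ - 1) := by
      rw [hU₃, h2, δ_inner, δ_inner]
      have hne : ((-(ℓ:ℤ) - 1, ℓ + 1) : ℤ × ℕ) ≠ (-(ℓ:ℤ), ℓ) := by
        intro hh; rw [Prod.mk.injEq] at hh; omega
      rw [if_neg hne, if_pos rfl]
      simp
    rw [he, h2] at h1
    exact δ_ne (by intro hh; rw [Prod.mk.injEq] at hh; omega) h1.symm
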